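/- Fix naturals d ≥ 1, N, Γ, and t, and B : Fin N → Finset (Fin Γ) with t < |B i| for every client i. Over the rationals define C_UE := d·N + d·Σ_{i=1}^{N} |B i|/(|B i| − t); C_BS := d·(Γ − 1); C_BSF := d + d·Σ_{P ∈ image(B)} |P|/(|P| − t), where image(B) := {B i : i ∈ [N]}; C_s := C_UE + C_BS + C_BSF; and S := d·Σ_{i=1}^{N} |B i|/(|B i| − t). Then C_s − d·N − d·Γ ≤ 2 · S. -/

import Mathlib

lemma sum_image_le' {α β M : Type*} [DecidableEq β] [AddCommMonoid M] [PartialOrder M] [IsOrderedAddMonoid M]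
    (s : Finset α) (f : α → β) (g : β → M) (hg : ∀ a ∈ s, 0 ≤ g (f a)) :
    ∑ b ∈ s.image f, g b ≤ ∑ a ∈ s, g (f a) := by
  classical
  induction s using Finset.induction_on with
  | empty => simp
  | @insert a s h ih =>
    rw [Finset.image_insert, Finset.sum_insert h]
    have ih' := ih (fun x hx => hg x (Finset.mem_insert_of_mem hx))
    by_cases hfa : f a ∈ s.image f
    · rw [Finset.insert_eq_self.mpr hfa]
      exact ih'.trans (le_add_of_nonneg_left (hg a (Finset.mem_insert_self a s)))
    · rw [Finset.sum_insert hfa]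
      exact add_le_add le_rfl ih'

/-- Upper bound of inequality (4) in Theorem 3: the communication cost of the scheme in
excess of the fixed terms `d * N` and `d * Γ` is at most a factor `β = 2` times the total
secret-sharing load `S = d * ∑ i, |B i| / (|B i| - t)`. -/
theorem scheme_excess_cost_upper_bound
    {d N Γ t : ℕ} (hd : 1 ≤ d)
    (B : Fin N → Finset (Fin Γ)) (hB : ∀ i, t < (B i).card) :
    ((((d : ℚ) * N + d * ∑ i : Fin N, ((B i).card : ℚ) / (((B i).card : ℚ) - t))
          + (d : ℚ) * ((Γ : ℚ) - 1)
          + ((d : ℚ) + d * ∑ P ∈ Finset.univ.image B,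
              ((P.card : ℚ) / ((P.card : ℚ) - t))))
        - (d : ℚ) * N - (d : ℚ) * Γ)
      ≤ 2 * ((d : ℚ) * ∑ i : Fin N, ((B i).card : ℚ) / (((B i).card : ℚ) - t)) := by
  have himg : ∑ P ∈ Finset.univ.image B, ((P.card : ℚ) / ((P.card : ℚ) - t))
      ≤ ∑ i : Fin N, ((B i).card : ℚ) / (((B i).card : ℚ) - t) := by
    apply sum_image_le'
    intro i _
    have ht : (t : ℚ) < ((B i).card : ℚ) := by exact_mod_cast hB i
    exact div_nonneg (by positivity) (by linarith)
  have hd' : (0 : ℚ) ≤ d := by positivity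
  nlinarith [mul_le_mul_of_nonneg_left himg hd']
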